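/- For any clause-set F, var(F) is the disjoint union of the largest autarky-var-set and the variables of the lean kernel: var_aut(F) ∪ var(Na(F)) = var(F) and var_aut(F) ∩ var(Na(F)) = ∅, where var_aut(F) := ⋃{var(φ) : φ autarky for F with var(φ) ⊆ var(F)}. -/

import Mathlib

open scoped Classical

abbrev Var := ℕ
abbrev Lit := Var × Bool
abbrev Clause := Finset Lit
abbrev ClauseSet := Finset Clause
abbrev PAssign := Var → Option Bool

def Lit.neg (x : Lit) : Lit := (x.1, !x.2)

def clauseVars (C : Clause) : Finset Var := C.image Prod.fst

def csVars (F : ClauseSet) : Finset Var := F.biUnion clauseVars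

def paVars (φ : PAssign) : Set Var := {v | φ v ≠ none}

def litTrue (φ : PAssign) (x : Lit) : Prop := φ x.1 = some x.2

def litFalse (φ : PAssign) (x : Lit) : Prop := φ x.1 = some (!x.2)

def satClause (φ : PAssign) (C : Clause) : Prop := ∃ x ∈ C, litTrue φ x

def touches (φ : PAssign) (C : Clause) : Prop := ∃ x ∈ C, φ x.1 ≠ none

def isAutarky (φ : PAssign) (F : ClauseSet) : Prop := ∀ C ∈ F, touches φ C → satClause φ C

noncomputable def applyPA (φ : PAssign) (F : ClauseSet) : ClauseSet :=
  (F.filter fun C => ¬ satClause φ C).image fun C => C.filter fun x => ¬ litFalse φ x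

def satCS (F : ClauseSet) : Prop := ∃ φ : PAssign, applyPA φ F = ∅

def isLean (F : ClauseSet) : Prop :=
  ∀ φ : PAssign, isAutarky φ F → paVars φ ⊆ ↑(csVars F) → ∀ v, φ v = none

noncomputable def leanKernel (F : ClauseSet) : ClauseSet :=
  (F.powerset.filter isLean).sup id

def varAut (F : ClauseSet) : Set Var :=
  {v | ∃ φ : PAssign, isAutarky φ F ∧ paVars φ ⊆ ↑(csVars F) ∧ φ v ≠ none}

/-! ### Auxiliary lemmas -/

lemma mem_csVars_of_mem {C : Clause} {F : ClauseSet} {x : Lit} (hC : C ∈ F) (hx : x ∈ C) :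
    x.1 ∈ csVars F :=
  Finset.mem_biUnion.2 ⟨C, hC, Finset.mem_image_of_mem _ hx⟩

lemma csVars_mono {G F : ClauseSet} (h : G ⊆ F) : csVars G ⊆ csVars F := by
  intro v hv
  rcases Finset.mem_biUnion.1 hv with ⟨C, hC, hvC⟩
  exact Finset.mem_biUnion.2 ⟨C, h hC, hvC⟩

/-- Composition of partial assignments: use `φ` where defined, else `ψ`. -/
def comp (φ ψ : PAssign) : PAssign := fun v =>
  match φ v with
  | some b => some b
  | none => ψ v

lemma comp_of_ne {φ ψ : PAssign} {v : Var} (h : φ v ≠ none) : comp φ ψ v = φ v := by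
  unfold comp
  cases hv : φ v with
  | none => exact absurd hv h
  | some b => rfl

lemma comp_of_eq {φ ψ : PAssign} {v : Var} (h : φ v = none) : comp φ ψ v = ψ v := by
  unfold comp
  rw [h]

lemma litTrue_comp_left {φ ψ : PAssign} {x : Lit} (h : litTrue φ x) :
    litTrue (comp φ ψ) x := by
  unfold litTrue at *
  rw [comp_of_ne (by rw [h]; simp), h]

lemma paVars_comp {φ ψ : PAssign} : paVars (comp φ ψ) ⊆ paVars φ ∪ paVars ψ := by
  intro v hv
  by_cases h : φ v = none
  · right; show ψ v ≠ none; rw [← comp_of_eq (ψ := ψ) h]; exact hv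
  · left; exact h

lemma isAutarky_comp {φ ψ : PAssign} {F : ClauseSet}
    (hφ : isAutarky φ F) (hψ : isAutarky ψ F) : isAutarky (comp φ ψ) F := by
  intro C hC ht
  by_cases htφ : touches φ C
  · rcases hφ C hC htφ with ⟨x, hx, hxT⟩
    exact ⟨x, hx, litTrue_comp_left hxT⟩
  · simp only [touches, not_exists, not_and, not_not] at htφ
    have hagree : ∀ x ∈ C, comp φ ψ x.1 = ψ x.1 := fun x hx => comp_of_eq (htφ x hx)
    have htψ : touches ψ C := by
      rcases ht with ⟨x, hx, hxn⟩
      exact ⟨x, hx, by rwa [hagree x hx] at hxn⟩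
    rcases hψ C hC htψ with ⟨x, hx, hxT⟩
    exact ⟨x, hx, by unfold litTrue at *; rw [hagree x hx]; exact hxT⟩

/-- Restriction of a partial assignment to a finite variable set. -/
def restrict (φ : PAssign) (V : Finset Var) : PAssign := fun v =>
  if v ∈ V then φ v else none

lemma restrict_autarky {φ : PAssign} {F G : ClauseSet} (hGF : G ⊆ F)
    (hφ : isAutarky φ F) : isAutarky (restrict φ (csVars G)) G := by
  intro C hC ht
  have hagree : ∀ x ∈ C, restrict φ (csVars G) x.1 = φ x.1 := by
    intro x hx
    unfold restrict
    rw [if_pos (mem_csVars_of_mem hC hx)]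
  have htφ : touches φ C := by
    rcases ht with ⟨x, hx, hxn⟩
    exact ⟨x, hx, by rwa [hagree x hx] at hxn⟩
  rcases hφ C (hGF hC) htφ with ⟨x, hx, hxT⟩
  exact ⟨x, hx, by unfold litTrue at *; rw [hagree x hx]; exact hxT⟩

lemma restrict_paVars (φ : PAssign) (V : Finset Var) : paVars (restrict φ V) ⊆ ↑V := by
  intro v hv
  by_contra h
  exact hv (by unfold restrict; rw [if_neg (by simpa using h)])

/-- If `G ⊆ F` is lean and `φ` is an autarky for `F`, then `φ` is undefined on `csVars G`. -/
lemma autarky_none_on_lean {φ : PAssign} {F G : ClauseSet} (hGF : G ⊆ F)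
    (hG : isLean G) (hφ : isAutarky φ F) {v : Var} (hv : v ∈ csVars G) : φ v = none := by
  have h := hG (restrict φ (csVars G)) (restrict_autarky hGF hφ)
    (restrict_paVars φ (csVars G)) v
  unfold restrict at h
  rwa [if_pos hv] at h

lemma leanKernel_subset (F : ClauseSet) : leanKernel F ⊆ F := by
  intro C hC
  rcases Finset.mem_sup.1 hC with ⟨G, hG, hCG⟩
  exact Finset.mem_powerset.1 (Finset.mem_filter.1 hG).1 hCG

lemma mem_csVars_leanKernel {F : ClauseSet} {v : Var} (hv : v ∈ csVars (leanKernel F)) :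
    ∃ G, G ⊆ F ∧ isLean G ∧ v ∈ csVars G := by
  rcases Finset.mem_biUnion.1 hv with ⟨C, hC, hvC⟩
  rcases Finset.mem_sup.1 hC with ⟨G, hG, hCG⟩
  rcases Finset.mem_filter.1 hG with ⟨hGp, hGl⟩
  exact ⟨G, Finset.mem_powerset.1 hGp, hGl, Finset.mem_biUnion.2 ⟨C, hCG, hvC⟩⟩

lemma leanKernel_isLean (F : ClauseSet) : isLean (leanKernel F) := by
  intro ψ hψ hvars v
  by_contra h
  have hv : v ∈ csVars (leanKernel F) := by
    have := hvars (show v ∈ paVars ψ from h)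
    simpa using this
  rcases mem_csVars_leanKernel hv with ⟨G, hGF, hGl, hvG⟩
  have hGK : G ⊆ leanKernel F := by
    intro C hC
    exact Finset.mem_sup.2 ⟨G, Finset.mem_filter.2 ⟨Finset.mem_powerset.2 hGF, hGl⟩, hC⟩
  exact h (autarky_none_on_lean hGK hGl hψ hvG)

lemma varAut_subset_csVars (F : ClauseSet) : varAut F ⊆ ↑(csVars F) := by
  rintro v ⟨φ, _, hvars, hv⟩
  exact hvars hv

/-- Existence of a maximal autarky. -/
lemma exists_max_autarky (F : ClauseSet) :
    ∃ Φ : PAssign, isAutarky Φ F ∧ paVars Φ ⊆ ↑(csVars F) ∧ ∀ v ∈ varAut F, Φ v ≠ none := by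
  suffices h : ∀ S : Finset Var, ∃ Φ : PAssign, isAutarky Φ F ∧ paVars Φ ⊆ ↑(csVars F) ∧
      ∀ v ∈ S, v ∈ varAut F → Φ v ≠ none by
    rcases h (csVars F) with ⟨Φ, h1, h2, h3⟩
    exact ⟨Φ, h1, h2, fun v hv => h3 v (by simpa using varAut_subset_csVars F hv) hv⟩
  intro S
  induction S using Finset.induction_on with
  | empty =>
      refine ⟨fun _ => none, ?_, ?_, ?_⟩
      · rintro C _ ⟨x, _, hx⟩; exact absurd rfl hx
      · rintro v hv; exact absurd rfl hv
      · intro v hv; simp at hv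
  | @insert a S ha ih =>
      obtain ⟨Φ, h1, h2, h3⟩ := ih
      by_cases hav : a ∈ varAut F
      · obtain ⟨φ, hφ1, hφ2, hφ3⟩ := hav
        refine ⟨comp φ Φ, isAutarky_comp hφ1 h1, ?_, ?_⟩
        · intro v hv
          rcases paVars_comp hv with h | h
          · exact hφ2 h
          · exact h2 h
        · intro v hv hvA
          rcases Finset.mem_insert.1 hv with rfl | hvS
          · rw [comp_of_ne hφ3]; exact hφ3
          · by_cases hc : φ v = none
            · rw [comp_of_eq hc]; exact h3 v hvS hvA
            · rw [comp_of_ne hc]; exact hc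
      · refine ⟨Φ, h1, h2, ?_⟩
        intro v hv hvA
        rcases Finset.mem_insert.1 hv with rfl | hvS
        · exact absurd hvA hav
        · exact h3 v hvS hvA

theorem varAut_union_leanKernel_vars (F : ClauseSet) :
    varAut F ∪ ↑(csVars (leanKernel F)) = ↑(csVars F) ∧
    varAut F ∩ ↑(csVars (leanKernel F)) = ∅ := by
  obtain ⟨Φ, hΦaut, hΦvars, hΦmax⟩ := exists_max_autarky F
  -- varAut F = paVars Φ
  have hPA : ∀ v, v ∈ varAut F ↔ Φ v ≠ none := by
    intro v
    constructor
    · exact hΦmax v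
    · intro h; exact ⟨Φ, hΦaut, hΦvars, h⟩
  -- the untouched part
  set G : ClauseSet := F.filter (fun C => ¬ touches Φ C) with hGdef
  have hGF : G ⊆ F := Finset.filter_subset _ _
  have hGuntouched : ∀ C ∈ G, ∀ x ∈ C, Φ x.1 = none := by
    intro C hC x hx
    have := (Finset.mem_filter.1 hC).2
    by_contra h
    exact this ⟨x, hx, h⟩
  -- Φ is undefined on csVars G
  have hΦnoneG : ∀ v ∈ csVars G, Φ v = none := by
    intro v hv
    rcases Finset.mem_biUnion.1 hv with ⟨C, hC, hvC⟩
    rcases Finset.mem_image.1 hvC with ⟨x, hx, rfl⟩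
    exact hGuntouched C hC x hx
  -- G is lean
  have hGlean : isLean G := by
    intro ψ hψ hψvars v
    by_contra h
    have hcomp : isAutarky (comp Φ ψ) F := by
      intro C hC ht
      by_cases htΦ : touches Φ C
      · rcases hΦaut C hC htΦ with ⟨x, hx, hxT⟩
        exact ⟨x, hx, litTrue_comp_left hxT⟩
      · have hCG : C ∈ G := Finset.mem_filter.2 ⟨hC, htΦ⟩
        have hagree : ∀ x ∈ C, comp Φ ψ x.1 = ψ x.1 :=
          fun x hx => comp_of_eq (hGuntouched C hCG x hx)
        have htψ : touches ψ C := by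
          rcases ht with ⟨x, hx, hxn⟩
          exact ⟨x, hx, by rwa [hagree x hx] at hxn⟩
        rcases hψ C hCG htψ with ⟨x, hx, hxT⟩
        exact ⟨x, hx, by unfold litTrue at *; rw [hagree x hx]; exact hxT⟩
    have hcompvars : paVars (comp Φ ψ) ⊆ ↑(csVars F) := by
      intro w hw
      rcases paVars_comp hw with h' | h'
      · exact hΦvars h'
      · exact csVars_mono hGF (by simpa using hψvars h')
    have hvAut : v ∈ varAut F := by
      refine ⟨comp Φ ψ, hcomp, hcompvars, ?_⟩
      rw [comp_of_eq (hΦnoneG v (by simpa using hψvars (show v ∈ paVars ψ from h)))]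
      exact h
    have : Φ v ≠ none := (hPA v).1 hvAut
    exact this (hΦnoneG v (by simpa using hψvars (show v ∈ paVars ψ from h)))
  -- G ⊆ leanKernel F
  have hGK : csVars G ⊆ csVars (leanKernel F) := by
    apply csVars_mono
    intro C hC
    exact Finset.mem_sup.2 ⟨G, Finset.mem_filter.2 ⟨Finset.mem_powerset.2 hGF, hGlean⟩, hC⟩
  constructor
  · apply Set.eq_of_subset_of_subset
    · rintro v (hv | hv)
      · exact varAut_subset_csVars F hv
      · exact_mod_cast csVars_mono (leanKernel_subset F) (by simpa using hv)
    · intro v hv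
      simp only [Finset.coe_sort_coe, Set.mem_union] at *
      by_cases hva : v ∈ varAut F
      · exact Or.inl hva
      -- v ∉ varAut F: show v ∈ csVars G
      · right
        have hvF : v ∈ csVars F := by simpa using hv
        rcases Finset.mem_biUnion.1 hvF with ⟨C, hC, hvC⟩
        -- claim: some clause containing v is untouched by Φ
        by_cases hall : ∀ C' ∈ F, v ∈ clauseVars C' → touches Φ C'
        · -- extend Φ at v : contradiction with v ∉ varAut F
          exfalso
          have hΦv : Φ v = none := by
            by_contra h
            exact hva ((hPA v).2 h)
          set Φ' : PAssign := fun w => if w = v then some true else Φ w with hΦ'def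
          have hΦ'v : Φ' v = some true := by simp [hΦ'def]
          have hΦ'ne : ∀ w, w ≠ v → Φ' w = Φ w := by
            intro w hw; simp [hΦ'def, hw]
          have hΦ'aut : isAutarky Φ' F := by
            intro C' hC' ht
            have hsat : satClause Φ C' := by
              rcases ht with ⟨x, hx, hxn⟩
              by_cases hxv : x.1 = v
              · exact hΦaut C' hC' (hall C' hC' (by rw [← hxv]; exact Finset.mem_image_of_mem _ hx))
              · apply hΦaut C' hC'
                refine ⟨x, hx, ?_⟩
                rwa [hΦ'ne _ hxv] at hxn
            rcases hsat with ⟨x, hx, hxT⟩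
            refine ⟨x, hx, ?_⟩
            unfold litTrue at *
            by_cases hxv : x.1 = v
            · rw [hxv, hΦv] at hxT; exact absurd hxT (by simp)
            · rw [hΦ'ne _ hxv]; exact hxT
          have : v ∈ varAut F := by
            refine ⟨Φ', hΦ'aut, ?_, by rw [hΦ'v]; simp⟩
            intro w hw
            by_cases hwv : w = v
            · rw [hwv]; simpa using hvF
            · apply hΦvars
              show Φ w ≠ none
              rw [← hΦ'ne _ hwv]
              exact hw
          exact hva this
        · push_neg at hall
          rcases hall with ⟨C', hC', hvC', hnt⟩
          apply hGK
          exact Finset.mem_biUnion.2 ⟨C', Finset.mem_filter.2 ⟨hC', hnt⟩, hvC'⟩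
  · apply Set.eq_empty_iff_forall_notMem.2
    rintro v ⟨hv1, hv2⟩
    rcases mem_csVars_leanKernel (by simpa using hv2) with ⟨G', hG'F, hG'lean, hvG'⟩
    rcases hv1 with ⟨φ, hφaut, hφvars, hφv⟩
    exact hφv (autarky_none_on_lean hG'F hG'lean hφaut hvG')
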